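/- arXiv:1705.06060 — 5 statements merged into one kernel-verified Lean document; each statement's English description precedes it below -/
import Mathlib

section
/- Let G be a group and H a subgroup such that there is a uniform finite bound n with [H : H ∩ gHg⁻¹] ≤ n for all g ∈ G. Then there exists a normal subgroup N of G commensurable with H, i.e., [H : H ∩ N] and [N : H ∩ N] are both finite. -/
/-!
Auxiliary machinery for Schlichting's theorem, following a Wagner/Bergman–Lenstra
style argument.
-/

namespace SchlichtingAux


variable {G : Type*} [Group G]

/-- Conjugate subgroup `g H g⁻¹`. -/
noncomputable abbrev cj (H : Subgroup G) (g : G) : Subgroup G :=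
  H.map (MulAut.conj g).toMonoidHom

lemma mem_cj {H : Subgroup G} {g x : G} : x ∈ cj H g ↔ g⁻¹ * x * g ∈ H := by
  rw [Subgroup.mem_map_equiv]
  simp [MulAut.conj_symm_apply, mul_assoc]

lemma cj_one (H : Subgroup G) : cj H 1 = H := by
  ext x; simp [mem_cj]

lemma cj_cj (H : Subgroup G) (a b : G) : cj (cj H b) a = cj H (a * b) := by
  ext x; simp [mem_cj, mul_assoc]

lemma cj_le_cj {H K : Subgroup G} (h : H ≤ K) (a : G) : cj H a ≤ cj K a :=
  Subgroup.map_mono h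

/-- Transport of relindex along conjugation. -/
lemma relindex_cj (A B : Subgroup G) (x : G) :
    (cj A x).relIndex (cj B x) = A.relIndex B := by
  have h := Subgroup.relIndex_comap (H := cj A x) ((MulAut.conj x).toMonoidHom) B
  have hc : Subgroup.comap (MulAut.conj x).toMonoidHom (cj A x) = A := by
    ext y
    simp [Subgroup.mem_comap, mem_cj, mul_assoc]
  rw [hc] at h
  exact h.symm

/-- `[gHg⁻¹ : gHg⁻¹ ∩ kKk⁻¹] = [k⁻¹gH(k⁻¹g)⁻¹ : ... ∩ K]`. -/
lemma relindex_cj_cj (A B : Subgroup G) (g k : G) :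
    (cj A g).relIndex (cj B k) = (cj A (k⁻¹ * g)).relIndex B := by
  have := relindex_cj (cj A g) (cj B k) k⁻¹
  rw [cj_cj, cj_cj, inv_mul_cancel, cj_one] at this
  exact this.symm

/-- The canonical map `A ⧸ (C ∩ A) → B ⧸ (C ∩ B)` for `A ≤ B`. -/
noncomputable def quotMap {A B : Subgroup G} (C : Subgroup G) (hAB : A ≤ B) :
    A ⧸ C.subgroupOf A → B ⧸ C.subgroupOf B :=
  Quotient.map' (Subgroup.inclusion hAB) (by
    intro a b hab
    rw [QuotientGroup.leftRel_apply] at hab ⊢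
    simpa [Subgroup.mem_subgroupOf] using hab)

lemma quotMap_injective {A B : Subgroup G} (C : Subgroup G) (hAB : A ≤ B) :
    Function.Injective (quotMap C hAB) := by
  intro x y
  refine Quotient.inductionOn₂' x y ?_
  intro a b h
  apply Quotient.sound'
  have h' := Quotient.exact' h
  rw [QuotientGroup.leftRel_apply] at h' ⊢
  simpa [Subgroup.mem_subgroupOf] using h'

lemma relindex_le_of_le {A B C : Subgroup G} (hAB : A ≤ B) (hB : C.relIndex B ≠ 0) :
    C.relIndex A ≤ C.relIndex B ∧ C.relIndex A ≠ 0 := by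
  have hBfin : Finite (B ⧸ C.subgroupOf B) := Nat.finite_of_card_ne_zero hB
  have hAfin : Finite (A ⧸ C.subgroupOf A) :=
    Finite.of_injective _ (quotMap_injective C hAB)
  constructor
  · exact Nat.card_le_card_of_injective _ (quotMap_injective C hAB)
  · rw [Subgroup.relIndex, Subgroup.index]
    exact Nat.card_ne_zero.mpr ⟨⟨QuotientGroup.mk 1⟩, hAfin⟩

section Orbits

variable {H : Subgroup G}

lemma stab_eq (H A : Subgroup G) (g : G) :
    MulAction.stabilizer A ((g : G ⧸ H)) = (cj H g).subgroupOf A := by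
  ext a
  rw [MulAction.mem_stabilizer_iff, Subgroup.mem_subgroupOf, mem_cj]
  rw [show a • ((g : G ⧸ H)) = (a : G) • ((g : G ⧸ H)) from rfl,
    MulAction.Quotient.smul_mk H (a : G) g, smul_eq_mul, eq_comm, QuotientGroup.eq]
  rw [mul_assoc]

lemma card_orbit (H A : Subgroup G) (g : G) :
    Nat.card (MulAction.orbit A ((g : G ⧸ H))) = (cj H g).relIndex A := by
  rw [Nat.card_congr (MulAction.orbitEquivQuotientStabilizer A ((g : G ⧸ H)))]
  rw [stab_eq H A g]
  rfl

lemma orbit_mono {A B : Subgroup G} (h : A ≤ B) (z : G ⧸ H) :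
    MulAction.orbit A z ⊆ MulAction.orbit B z := by
  rintro y ⟨a, rfl⟩
  exact ⟨⟨(a : G), h a.2⟩, rfl⟩

lemma smul_mem_orbit_of_mem {A : Subgroup G} {z y : G ⧸ H} {g : G} (hg : g ∈ A)
    (hy : y ∈ MulAction.orbit A z) : g • y ∈ MulAction.orbit A z := by
  obtain ⟨a, rfl⟩ := hy
  refine ⟨⟨g, hg⟩ * a, ?_⟩
  show (⟨g, hg⟩ * a : ↥A) • z = g • ((a : ↥A) • z)
  rw [mul_smul]
  rfl

lemma inv_smul_mem_of_smul_mem {S : Set (G ⧸ H)} (hfin : S.Finite) {x : G}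
    (h : ∀ s ∈ S, x • s ∈ S) {s : G ⧸ H} (hs : s ∈ S) : x⁻¹ • s ∈ S := by
  have himg : (x • ·) '' S = S := by
    apply Set.eq_of_subset_of_ncard_le
    · rintro y ⟨s', hs', rfl⟩; exact h s' hs'
    · rw [Set.ncard_image_of_injective S (MulAction.injective x)]
    · exact hfin
  rw [← himg] at hs
  obtain ⟨s', hs', rfl⟩ := hs
  rwa [inv_smul_smul]

lemma orbit_closure_biUnion {ι : Type*} {F : Finset ι} {x₀ : ι} (hx₀ : x₀ ∈ F)
    (A : ι → Subgroup G) (z : G ⧸ H) (S : Set (G ⧸ H)) (hfin : S.Finite)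
    (horb : ∀ x ∈ F, MulAction.orbit (A x) z = S) :
    MulAction.orbit (Subgroup.closure (⋃ x ∈ F, ((A x : Set G)))) z = S := by
  have hz : z ∈ S := by
    rw [← horb x₀ hx₀]; exact MulAction.mem_orbit_self z
  have hinv : ∀ g ∈ Subgroup.closure (⋃ x ∈ F, ((A x : Set G))), ∀ s ∈ S, g • s ∈ S := by
    intro g hg
    refine Subgroup.closure_induction (p := fun g _ => ∀ s ∈ S, g • s ∈ S) ?_ ?_ ?_ ?_ hg
    · intro y hy s hs
      obtain ⟨x, hx, hyx⟩ := by simpa using hy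
      rw [← horb x hx] at hs ⊢
      exact smul_mem_orbit_of_mem hyx hs
    · intro s hs; rwa [one_smul]
    · intro a b _ _ ha hb s hs
      rw [mul_smul]; exact ha _ (hb _ hs)
    · intro a _ ha s hs
      exact inv_smul_mem_of_smul_mem hfin ha hs
  apply Set.Subset.antisymm
  · rintro y ⟨⟨j, hj⟩, rfl⟩
    exact hinv j hj z hz
  · rw [← horb x₀ hx₀]
    exact orbit_mono (fun a ha => Subgroup.subset_closure (Set.mem_biUnion hx₀ ha)) z

end Orbits

lemma no_inj_of_relindex_le {A C : Subgroup G} {c : ℕ}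
    (h1 : C.relIndex A ≤ c) (h2 : C.relIndex A ≠ 0)
    (f : Fin (c + 1) → A ⧸ C.subgroupOf A) : ¬ Function.Injective f := by
  intro hinj
  have hfin : Finite (A ⧸ C.subgroupOf A) := Nat.finite_of_card_ne_zero h2
  have : Nat.card (A ⧸ C.subgroupOf A) ≤ c := h1
  have hcard := Nat.card_le_card_of_injective f hinj
  simp only [Nat.card_eq_fintype_card, Fintype.card_fin] at hcard
  omega

lemma relindex_iSup_le {ι : Type*} [Nonempty ι] [DecidableEq ι] {A : ι → Subgroup G}
    (hdir : Directed (· ≤ ·) A) (C : Subgroup G) (c : ℕ)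
    (hbd : ∀ i, C.relIndex (A i) ≤ c ∧ C.relIndex (A i) ≠ 0) :
    C.relIndex (⨆ i, A i) ≤ c ∧ C.relIndex (⨆ i, A i) ≠ 0 := by
  have key : ∀ f : Fin (c + 1) → (⨆ i, A i : Subgroup G) ⧸ C.subgroupOf (⨆ i, A i),
      ¬ Function.Injective f := by
    intro f hinj
    have hmem : ∀ i : Fin (c + 1), ∃ j, (((f i).out : G)) ∈ A j := by
      intro i
      have h2 := ((f i).out).2
      rwa [Subgroup.mem_iSup_of_directed hdir] at h2
    choose j hj using hmem
    obtain ⟨k, hk⟩ := hdir.finset_le (Finset.univ.image j)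
    have hk' : ∀ i : Fin (c + 1), ((f i).out : G) ∈ A k := fun i =>
      hk (j i) (Finset.mem_image_of_mem j (Finset.mem_univ i)) (hj i)
    set g : Fin (c + 1) → (A k) ⧸ C.subgroupOf (A k) :=
      fun i => QuotientGroup.mk ⟨((f i).out : G), hk' i⟩ with hg
    have hginj : Function.Injective g := by
      intro a b hab
      apply hinj
      rw [← QuotientGroup.out_eq' (f a), ← QuotientGroup.out_eq' (f b)]
      have hab' : ((f a).out : G)⁻¹ * ((f b).out : G) ∈ C := by
        have := QuotientGroup.eq.mp hab
        simpa [Subgroup.mem_subgroupOf] using this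
      apply QuotientGroup.eq.mpr
      simpa [Subgroup.mem_subgroupOf] using hab'
    exact no_inj_of_relindex_le (hbd k).1 (hbd k).2 g hginj
  have hfin : Finite ((⨆ i, A i : Subgroup G) ⧸ C.subgroupOf (⨆ i, A i)) := by
    by_contra hinf
    rw [not_finite_iff_infinite] at hinf
    exact key _ (Fin.valEmbedding.trans (Infinite.natEmbedding _)).injective
  have hne : Nonempty ((⨆ i, A i : Subgroup G) ⧸ C.subgroupOf (⨆ i, A i)) :=
    ⟨QuotientGroup.mk 1⟩
  constructor
  · by_contra hgt
    push_neg at hgt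
    have hc1 : c + 1 ≤ Nat.card ((⨆ i, A i : Subgroup G) ⧸ C.subgroupOf (⨆ i, A i)) := hgt
    have e := (Finite.equivFin ((⨆ i, A i : Subgroup G) ⧸ C.subgroupOf (⨆ i, A i)))
    exact key (fun i => e.symm (Fin.castLE hc1 i))
      (e.symm.injective.comp (Fin.castLE_injective hc1))
  · exact Nat.card_ne_zero.mpr ⟨hne, hfin⟩

/-- The family of finite nonempty intersections of conjugates of `H`. -/
def IsK (H K : Subgroup G) : Prop :=
  ∃ F : Finset G, F.Nonempty ∧ K = ⨅ x ∈ F, cj H x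

lemma isK_self (H : Subgroup G) : IsK H H := by
  refine ⟨{1}, Finset.singleton_nonempty 1, ?_⟩
  simp [cj_one]

lemma isK_le {H K : Subgroup G} (h : IsK H K) : ∃ x, K ≤ cj H x := by
  obtain ⟨F, ⟨x, hx⟩, rfl⟩ := h
  exact ⟨x, biInf_le _ hx⟩

lemma cj_biInf {ι : Type*} (F : Finset ι) (B : ι → Subgroup G) (u : G) :
    cj (⨅ x ∈ F, B x) u = ⨅ x ∈ F, cj (B x) u := by
  ext y
  rw [mem_cj]
  simp only [Subgroup.mem_iInf]
  exact forall₂_congr fun i _ => (mem_cj (g := u)).symm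

lemma isK_cj {H K : Subgroup G} (h : IsK H K) (u : G) : IsK H (cj K u) := by
  classical
  obtain ⟨F, hne, rfl⟩ := h
  refine ⟨F.image (u * ·), hne.image _, ?_⟩
  rw [cj_biInf]
  ext y
  simp only [Subgroup.mem_iInf, Finset.mem_image, cj_cj]
  constructor
  · rintro h z ⟨x, hx, rfl⟩
    exact h x hx
  · intro h x hx
    exact h (u * x) ⟨x, hx, rfl⟩

lemma isK_biInf_cj {H K : Subgroup G} (h : IsK H K) {F : Finset G} (hF : F.Nonempty) :
    IsK H (⨅ x ∈ F, cj K x) := by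
  classical
  obtain ⟨F₀, hne₀, rfl⟩ := h
  refine ⟨(F ×ˢ F₀).image (fun p => p.1 * p.2), (hF.product hne₀).image _, ?_⟩
  ext y
  simp only [Subgroup.mem_iInf, Finset.mem_image, Finset.mem_product, cj_biInf, cj_cj]
  constructor
  · rintro h z ⟨p, ⟨hp1, hp2⟩, rfl⟩
    exact h p.1 hp1 p.2 hp2
  · intro h x hx x' hx'
    exact h (x * x') ⟨(x, x'), ⟨hx, hx'⟩, rfl⟩


lemma relindex_biInf_ne_zero {H : Subgroup G} (hpos : ∀ g, (cj H g).relIndex H ≠ 0)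
    (F : Finset G) : (⨅ x ∈ F, cj H x).relIndex H ≠ 0 := by
  classical
  induction F using Finset.induction_on with
  | empty => simp [Subgroup.relIndex_top_left]
  | @insert a s ha ih =>
    rw [Finset.iInf_insert]
    have key := Subgroup.relIndex_inf_mul_relIndex (cj H a) (⨅ x ∈ s, cj H x) H
    intro h0
    rw [← key] at h0
    rcases Nat.mul_eq_zero.mp h0 with h1 | h2
    · exact (relindex_le_of_le (inf_le_right : (⨅ x ∈ s, cj H x) ⊓ H ≤ H) (hpos a)).2 h1
    · exact ih h2


end SchlichtingAux

open SchlichtingAux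

/-- Schlichting's Theorem: if a subgroup `H` of `G` is uniformly commensurable with
all its `G`-conjugates, then it is commensurable with a normal subgroup of `G`. -/
theorem schlichting {G : Type*} [Group G] (H : Subgroup G) (n : ℕ)
    (hbound : ∀ g : G,
      0 < (H.map (MulAut.conj g).toMonoidHom).relIndex H ∧
      (H.map (MulAut.conj g).toMonoidHom).relIndex H ≤ n) :
    ∃ N : Subgroup G, N.Normal ∧ Subgroup.Commensurable H N := by
  classical
  have hpos : ∀ g : G, (cj H g).relIndex H ≠ 0 := fun g => (hbound g).1.ne'
  have hle : ∀ g : G, (cj H g).relIndex H ≤ n := fun g => (hbound g).2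
  -- pairwise bounds between conjugates
  have hpair : ∀ g k : G, (cj H g).relIndex (cj H k) ≤ n ∧ (cj H g).relIndex (cj H k) ≠ 0 := by
    intro g k
    rw [relindex_cj_cj]
    exact ⟨hle _, hpos _⟩
  -- uniform bounds for members of the family 𝒦
  have hKbound : ∀ K : Subgroup G, IsK H K → ∀ g : G,
      (cj H g).relIndex K ≤ n ∧ (cj H g).relIndex K ≠ 0 := by
    intro K hK g
    obtain ⟨x, hKx⟩ := isK_le hK
    obtain ⟨h1, h2⟩ := relindex_le_of_le hKx (hpair g x).2
    exact ⟨h1.trans (hpair g x).1, h2⟩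
  -- the minimal uniform bound m over the family 𝒦
  set P : ℕ → Prop := fun k => ∃ K : Subgroup G, IsK H K ∧ ∀ g : G, (cj H g).relIndex K ≤ k
    with hP
  have hPn : P n := ⟨H, isK_self H, hle⟩
  have hPex : ∃ k, P k := ⟨n, hPn⟩
  set m : ℕ := Nat.find hPex with hm
  obtain ⟨K₀, hK₀, hK₀le⟩ : P m := Nat.find_spec hPex
  have hmmin : ∀ k, k < m → ¬ P k := fun k hk => Nat.find_min hPex hk
  have hm0 : m ≠ 0 := by
    intro h0
    have := hK₀le 1
    rw [h0, Nat.le_zero] at this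
    exact (hKbound K₀ hK₀ 1).2 this
  have hn0 : n ≠ 0 := by
    intro h0
    have := hle 1
    rw [h0, Nat.le_zero] at this
    exact hpos 1 this
  -- the joins of conjugates of K₀
  set Jf : Finset G → Subgroup G :=
    fun F => Subgroup.closure (⋃ x ∈ F, ((cj K₀ x : Set G))) with hJf
  have hJmono : Monotone Jf := by
    intro F F' hFF'
    apply Subgroup.closure_mono
    exact Set.biUnion_subset_biUnion_left hFF'
  have hJdir : Directed (· ≤ ·) Jf := fun F F' =>
    ⟨F ∪ F', hJmono (Finset.subset_union_left), hJmono (Finset.subset_union_right)⟩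
  -- conjugation bound for conjugates of K₀
  have hcjK₀ : ∀ x g : G, (cj H g).relIndex (cj K₀ x) ≤ m ∧ (cj H g).relIndex (cj K₀ x) ≠ 0 := by
    intro x g
    rw [relindex_cj_cj]
    exact ⟨hK₀le _, (hKbound K₀ hK₀ _).2⟩
  -- main uniform bound for the joins
  have hmain : ∀ F : Finset G, H.relIndex (Jf F) ≤ n * m ∧ H.relIndex (Jf F) ≠ 0 := by
    intro F
    rcases F.eq_empty_or_nonempty with rfl | ⟨x₀, hx₀⟩
    · have : Jf ∅ = ⊥ := by
        rw [hJf]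
        simp [Subgroup.closure_empty]
      rw [this, Subgroup.relIndex_bot_right]
      exact ⟨Nat.one_le_iff_ne_zero.mpr (Nat.mul_ne_zero hn0 hm0), one_ne_zero⟩
    · -- the deep intersection D
      set D : Subgroup G := ⨅ x ∈ F, cj K₀ x with hD
      have hDK : IsK H D := isK_biInf_cj hK₀ ⟨x₀, hx₀⟩
      have hDle : ∀ g : G, (cj H g).relIndex D ≤ m ∧ (cj H g).relIndex D ≠ 0 := by
        intro g
        obtain ⟨h1, h2⟩ := relindex_le_of_le (biInf_le (fun x => cj K₀ x) hx₀) (hcjK₀ x₀ g).2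
        exact ⟨h1.trans (hcjK₀ x₀ g).1, h2⟩
      -- minimality gives a witness point where the index is exactly m
      have hDge : ∃ g : G, (cj H g).relIndex D = m := by
        by_contra hno
        push_neg at hno
        refine hmmin (m - 1) (by omega) ⟨D, hDK, fun g => ?_⟩
        have h1 := (hDle g).1
        have h2 := hno g
        omega
      obtain ⟨gs, hgs⟩ := hDge
      -- orbit analysis at the point `gs H`
      set z : G ⧸ H := (gs : G ⧸ H) with hz
      set S : Set (G ⧸ H) := MulAction.orbit D z with hS
      have hScard : Nat.card S = m := by
        rw [hS, hz, card_orbit, hgs]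
      have hSfin : S.Finite := by
        rw [← Set.finite_coe_iff]
        exact Nat.finite_of_card_ne_zero (by rw [hScard]; exact hm0)
      have horb : ∀ x ∈ F, MulAction.orbit (cj K₀ x) z = S := by
        intro x hx
        have hsub : S ⊆ MulAction.orbit (cj K₀ x) z :=
          orbit_mono (biInf_le (fun x => cj K₀ x) hx) z
        have hcard2 : Nat.card (MulAction.orbit (cj K₀ x) z) ≤ m := by
          rw [hz, card_orbit]
          exact (hcjK₀ x gs).1
        have hfin2 : (MulAction.orbit (cj K₀ x) z).Finite := by
          rw [← Set.finite_coe_iff]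
          apply Nat.finite_of_card_ne_zero
          rw [hz, card_orbit]
          exact (hcjK₀ x gs).2
        refine (Set.eq_of_subset_of_ncard_le hsub ?_ hfin2).symm
        rw [← Nat.card_coe_set_eq, ← Nat.card_coe_set_eq, hScard]
        exact hcard2
      have horbJ : MulAction.orbit (Jf F) z = S :=
        orbit_closure_biUnion hx₀ (fun x => cj K₀ x) z S hSfin horb
      have hJm : (cj H gs).relIndex (Jf F) = m := by
        rw [← hScard, ← horbJ, hz, card_orbit]
      -- index chain to H
      have hchain := Subgroup.relIndex_inf_mul_relIndex H (cj H gs) (Jf F)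
      have hHB : H.relIndex (cj H gs) ≤ n ∧ H.relIndex (cj H gs) ≠ 0 := by
        have h := relindex_cj_cj H H 1 gs
        rw [cj_one, mul_one] at h
        rw [h]
        exact ⟨hle _, hpos _⟩
      have h1 : H.relIndex (cj H gs ⊓ Jf F) ≤ n ∧ H.relIndex (cj H gs ⊓ Jf F) ≠ 0 := by
        obtain ⟨ha, hb⟩ := relindex_le_of_le (inf_le_left : cj H gs ⊓ Jf F ≤ cj H gs) hHB.2
        exact ⟨ha.trans hHB.1, hb⟩
      have hprod : (H ⊓ cj H gs).relIndex (Jf F) ≤ n * m ∧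
          (H ⊓ cj H gs).relIndex (Jf F) ≠ 0 := by
        rw [← hchain, hJm]
        constructor
        · exact Nat.mul_le_mul h1.1 le_rfl
        · exact Nat.mul_ne_zero h1.2 hm0
      have hdvd : H.relIndex (Jf F) ∣ (H ⊓ cj H gs).relIndex (Jf F) :=
        Subgroup.relIndex_dvd_of_le_left (Jf F) (inf_le_left : H ⊓ cj H gs ≤ H)
      constructor
      · exact (Nat.le_of_dvd (Nat.pos_of_ne_zero hprod.2) hdvd).trans hprod.1
      · intro h0
        rw [h0] at hdvd
        exact hprod.2 (Nat.eq_zero_of_zero_dvd hdvd)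
  -- the normal subgroup
  set N : Subgroup G := ⨆ F : Finset G, Jf F with hN
  have hHN : H.relIndex N ≤ n * m ∧ H.relIndex N ≠ 0 :=
    relindex_iSup_le hJdir H (n * m) hmain
  have hK₀N : K₀ ≤ N := by
    intro y hy
    have h1 : y ∈ Jf {1} := by
      apply Subgroup.subset_closure
      apply Set.mem_biUnion (Finset.mem_singleton_self 1)
      rw [cj_one]
      exact hy
    exact (le_iSup Jf ({1} : Finset G)) h1
  have hNH : N.relIndex H ≠ 0 := by
    have hdvd : N.relIndex H ∣ K₀.relIndex H :=
      Subgroup.relIndex_dvd_of_le_left H hK₀N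
    obtain ⟨F₀, hne₀, hF₀⟩ := hK₀
    have : K₀.relIndex H ≠ 0 := by
      rw [hF₀]
      exact relindex_biInf_ne_zero hpos F₀
    intro h0
    rw [h0] at hdvd
    exact this (Nat.eq_zero_of_zero_dvd hdvd)
  have hnormal : N.Normal := by
    constructor
    intro x hx g
    rw [hN, Subgroup.mem_iSup_of_directed hJdir] at hx
    obtain ⟨F, hF⟩ := hx
    have hconj : cj (Jf F) g ≤ Jf (F.image (g * ·)) := by
      rw [hJf]
      show Subgroup.map _ (Subgroup.closure _) ≤ _
      rw [MonoidHom.map_closure]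
      apply Subgroup.closure_mono
      rintro y ⟨u, hu, rfl⟩
      obtain ⟨x', hx', hux'⟩ := Set.mem_iUnion₂.mp hu
      apply Set.mem_biUnion (Finset.mem_image_of_mem _ hx')
      show (MulAut.conj g).toMonoidHom u ∈ (cj K₀ (g * x') : Set G)
      have : (MulAut.conj g).toMonoidHom u ∈ cj (cj K₀ x') g := by
        rw [mem_cj]
        show g⁻¹ * (g * u * g⁻¹) * g ∈ cj K₀ x'
        simpa [mul_assoc] using hux'
      rwa [cj_cj] at this
    have hx2 : g * x * g⁻¹ ∈ cj (Jf F) g := by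
      rw [mem_cj]
      simpa [mul_assoc] using hF
    exact (le_iSup Jf (F.image (g * ·))) (hconj hx2)
  exact ⟨N, hnormal, hHN.2, hNH⟩
end

section
/- Let Ω be a set, K a subgroup of the symmetric group on Ω, and F a nonempty K-invariant family of subsets of Ω such that there is a finite bound n with |A Δ B| ≤ n for all A, B ∈ F (symmetric difference). Then there exists a K-invariant subset S ⊆ Ω with |S Δ A| finite for every A ∈ F. -/
open Set

private lemma finite_symmDiff {α : Type*} {s t : Set α} (hs : s.Finite) (ht : t.Finite) :
    (symmDiff s t).Finite := by
  refine (hs.union ht).subset ?_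
  intro x hx
  rw [Set.mem_symmDiff] at hx
  rcases hx with ⟨h, _⟩ | ⟨h, _⟩
  · exact Or.inl h
  · exact Or.inr h

/-- Infinite families of uniformly small finite sets admit a "sunflower core" `Y`:
for every finite `X` there is a member strictly containing `Y` whose part outside `Y`
avoids `X`. -/
private lemma sunflower_core {α : Type*} :
    ∀ (m : ℕ) (𝒟 : Set (Set α)), (∀ D ∈ 𝒟, D.Finite ∧ D.ncard ≤ m) → 𝒟.Infinite →
    ∃ Y : Set α, Y.Finite ∧ ∀ X : Set α, X.Finite →
      ∃ D ∈ 𝒟, Y ⊆ D ∧ Y ≠ D ∧ (D \ Y) ∩ X = ∅ := by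
  intro m
  induction m with
  | zero =>
    intro 𝒟 hsmall hinf
    exfalso
    refine hinf ((Set.finite_singleton (∅ : Set α)).subset ?_)
    intro D hD
    have h := hsmall D hD
    have : D.ncard = 0 := Nat.le_zero.mp h.2
    rw [Set.ncard_eq_zero h.1] at this
    simpa using this
  | succ m ih =>
    intro 𝒟 hsmall hinf
    by_cases hx : ∃ x : α, {D | D ∈ 𝒟 ∧ x ∈ D}.Infinite
    · obtain ⟨x, hxinf⟩ := hx
      set 𝒟' : Set (Set α) := (fun D => D \ {x}) '' {D | D ∈ 𝒟 ∧ x ∈ D} with h𝒟'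
      have hinj : Set.InjOn (fun D => D \ {x}) {D | D ∈ 𝒟 ∧ x ∈ D} := by
        intro D1 h1 D2 h2 heq
        simp only at heq
        ext y
        by_cases hy : y = x
        · subst hy; simp [h1.2, h2.2]
        · constructor
          · intro hyD
            have : y ∈ D1 \ {x} := ⟨hyD, hy⟩
            rw [heq] at this; exact this.1
          · intro hyD
            have : y ∈ D2 \ {x} := ⟨hyD, hy⟩
            rw [← heq] at this; exact this.1
      have h𝒟'inf : 𝒟'.Infinite := hxinf.image hinj
      have h𝒟'small : ∀ D' ∈ 𝒟', D'.Finite ∧ D'.ncard ≤ m := by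
        rintro D' ⟨D, ⟨hD𝒟, hxD⟩, rfl⟩
        have h := hsmall D hD𝒟
        simp only []
        refine ⟨h.1.diff, ?_⟩
        have := Set.ncard_diff_singleton_add_one hxD h.1
        omega
      obtain ⟨Y', hY'fin, hprop⟩ := ih 𝒟' h𝒟'small h𝒟'inf
      have hxY' : x ∉ Y' := by
        obtain ⟨D', hD', hYD', -, -⟩ := hprop ∅ Set.finite_empty
        obtain ⟨D, ⟨-, -⟩, rfl⟩ := hD'
        simp only [] at hYD'
        intro hxy
        exact (hYD' hxy).2 rfl
      refine ⟨insert x Y', hY'fin.insert x, ?_⟩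
      intro X hX
      obtain ⟨D', hD', hYD', hYne', hdisj'⟩ := hprop (insert x X) (hX.insert x)
      obtain ⟨D, ⟨hD𝒟, hxD⟩, rfl⟩ := hD'
      simp only [] at hYD' hYne' hdisj'
      refine ⟨D, hD𝒟, ?_, ?_, ?_⟩
      · intro y hy
        rcases Set.mem_insert_iff.mp hy with rfl | hy
        · exact hxD
        · exact (hYD' hy).1
      · intro heq
        apply hYne'
        rw [← heq]
        ext y
        constructor
        · intro hy
          refine ⟨Set.mem_insert_of_mem x hy, fun h => ?_⟩
          rw [Set.mem_singleton_iff] at h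
          subst h
          exact hxY' hy
        · rintro ⟨hy, hne⟩
          rcases Set.mem_insert_iff.mp hy with rfl | hy'
          · exact absurd (Set.mem_singleton _) hne
          · exact hy'
      · ext y
        simp only [Set.mem_inter_iff, Set.mem_diff, Set.mem_insert_iff, Set.mem_empty_iff_false,
          iff_false, not_and]
        rintro ⟨hyD, hyn⟩ hyX
        push_neg at hyn
        have : y ∈ (D \ {x}) \ Y' ∩ insert x X :=
          ⟨⟨⟨hyD, fun h => hyn.1 h⟩, hyn.2⟩, Or.inr hyX⟩
        rw [hdisj'] at this
        exact this
    · push_neg at hx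
      refine ⟨∅, Set.finite_empty, ?_⟩
      intro X hX
      have hbadfin : ({(∅ : Set α)} ∪ ⋃ x ∈ X, {D | D ∈ 𝒟 ∧ x ∈ D}).Finite := by
        refine (Set.finite_singleton _).union (hX.biUnion ?_)
        intro x _
        exact hx x
      obtain ⟨D, hD⟩ := (hinf.diff hbadfin).nonempty
      refine ⟨D, hD.1, Set.empty_subset D, ?_, ?_⟩
      · rintro rfl
        exact hD.2 (Or.inl rfl)
      · ext y
        simp only [Set.diff_empty, Set.mem_inter_iff, Set.mem_empty_iff_false, iff_false, not_and]
        intro hyD hyX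
        exact hD.2 (Or.inr (Set.mem_biUnion hyX ⟨hD.1, hyD⟩))

/-- Peter Neumann's set-theoretic version of Schlichting's Theorem. -/
theorem neumann_sets {Ω : Type*} (K : Subgroup (Equiv.Perm Ω)) (𝔉 : Set (Set Ω))
    (hne : 𝔉.Nonempty)
    (hinv : ∀ k ∈ K, ∀ A ∈ 𝔉, (⇑k '' A) ∈ 𝔉)
    (n : ℕ)
    (hbound : ∀ A ∈ 𝔉, ∀ B ∈ 𝔉, (symmDiff A B).Finite ∧ (symmDiff A B).ncard ≤ n) :
    ∃ S : Set Ω, (∀ k ∈ K, ⇑k '' S = S) ∧ ∀ A ∈ 𝔉, (symmDiff S A).Finite := by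
  classical
  obtain ⟨A₀, hA₀⟩ := hne
  have hex : ∃ r : ℕ, ∃ C : Set Ω, ∀ A ∈ 𝔉, (symmDiff C A).Finite ∧ (symmDiff C A).ncard ≤ r :=
    ⟨n, A₀, fun A hA => hbound A₀ hA₀ A hA⟩
  set m := Nat.find hex with hm
  obtain ⟨C₀, hC₀⟩ := Nat.find_spec hex
  set M : Set (Set Ω) := {C | ∀ A ∈ 𝔉, (symmDiff C A).Finite ∧ (symmDiff C A).ncard ≤ m}
    with hMdef
  have hC₀M : C₀ ∈ M := hC₀
  -- M is K-invariant
  have hMinv : ∀ k ∈ K, ∀ C ∈ M, (⇑k '' C) ∈ M := by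
    intro k hk C hC A hA
    have hk' : (⇑k⁻¹ '' A) ∈ 𝔉 := hinv k⁻¹ (inv_mem hk) A hA
    have h1 := hC _ hk'
    have himg : symmDiff (⇑k '' C) A = ⇑k '' (symmDiff C (⇑k⁻¹ '' A)) := by
      rw [Set.image_symmDiff k.injective]
      congr 1
      rw [← Set.image_comp]
      simp
    rw [himg]
    exact ⟨h1.1.image _, by rw [Set.ncard_image_of_injective _ k.injective]; exact h1.2⟩
  -- M is finite
  have hMfin : M.Finite := by
    by_contra hinf
    have hinf' : M.Infinite := hinf
    have hm0 : m ≠ 0 := by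
      intro h0
      refine hinf ((Set.finite_singleton A₀).subset ?_)
      intro C hC
      have h := hC A₀ hA₀
      rw [h0] at h
      have h2 : symmDiff C A₀ = (⊥ : Set Ω) := (Set.ncard_eq_zero h.1).mp (Nat.le_zero.mp h.2)
      rw [symmDiff_eq_bot] at h2
      simpa using h2
    set 𝒟 : Set (Set Ω) := (fun C => symmDiff C A₀) '' M with h𝒟def
    have h𝒟inf : 𝒟.Infinite := hinf'.image (symmDiff_left_injective A₀).injOn
    have h𝒟small : ∀ D ∈ 𝒟, D.Finite ∧ D.ncard ≤ m := by
      rintro D ⟨C, hC, rfl⟩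
      exact hC A₀ hA₀
    obtain ⟨Y, hYfin, hprop⟩ := sunflower_core m 𝒟 h𝒟small h𝒟inf
    have hpred : ∃ C : Set Ω, ∀ A ∈ 𝔉,
        (symmDiff C A).Finite ∧ (symmDiff C A).ncard ≤ m - 1 := by
      refine ⟨symmDiff Y A₀, ?_⟩
      intro A hA
      set X := symmDiff A₀ A with hX
      have hXfin : X.Finite := (hbound A₀ hA₀ A hA).1
      obtain ⟨D, hD𝒟, hYD, hYne, hdisj⟩ := hprop X hXfin
      obtain ⟨C, hCM, rfl⟩ := hD𝒟
      have hDfin : (symmDiff C A₀).Finite := (hCM A₀ hA₀).1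
      have hkey : symmDiff (symmDiff Y A₀) A = symmDiff Y X := by
        rw [symmDiff_assoc]
      have hCA : symmDiff (symmDiff C A₀) X = symmDiff C A := by
        rw [symmDiff_assoc, symmDiff_symmDiff_cancel_left]
      set Pp := symmDiff C A₀ \ Y with hPp
      have hPfin : Pp.Finite := hDfin.diff
      have hPne : Pp.Nonempty := by
        rw [hPp, Set.diff_nonempty]
        intro hsub
        exact hYne (hYD.antisymm hsub)
      have hsub2 : Pp ∪ symmDiff Y X ⊆ symmDiff (symmDiff C A₀) X := by
        intro y hy
        rcases hy with hy | hy
        · rw [Set.mem_symmDiff]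
          refine Or.inl ⟨hy.1, ?_⟩
          intro hyX
          have h3 : y ∈ (symmDiff C A₀ \ Y) ∩ X := ⟨hy, hyX⟩
          rw [hdisj] at h3
          exact h3
        · rw [Set.mem_symmDiff] at hy ⊢
          rcases hy with ⟨hyY, hyX⟩ | ⟨hyX, hyY⟩
          · exact Or.inl ⟨hYD hyY, hyX⟩
          · refine Or.inr ⟨hyX, ?_⟩
            intro hyD
            have h3 : y ∈ (symmDiff C A₀ \ Y) ∩ X := ⟨⟨hyD, hyY⟩, hyX⟩
            rw [hdisj] at h3
            exact h3
      have hdisj2 : Disjoint Pp (symmDiff Y X) := by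
        rw [Set.disjoint_left]
        intro y hy hy'
        rw [Set.mem_symmDiff] at hy'
        rcases hy' with ⟨hyY, _⟩ | ⟨hyX, _⟩
        · exact hy.2 hyY
        · have h3 : y ∈ (symmDiff C A₀ \ Y) ∩ X := ⟨hy, hyX⟩
          rw [hdisj] at h3
          exact h3
      have hDXfin : (symmDiff (symmDiff C A₀) X).Finite := finite_symmDiff hDfin hXfin
      have hcount : Pp.ncard + (symmDiff Y X).ncard ≤ (symmDiff (symmDiff C A₀) X).ncard := by
        rw [← Set.ncard_union_eq hdisj2 hPfin (finite_symmDiff hYfin hXfin)]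
        exact Set.ncard_le_ncard hsub2 hDXfin
      have hPpos : 0 < Pp.ncard := (Set.ncard_pos hPfin).mpr hPne
      have hCAbound : (symmDiff (symmDiff C A₀) X).ncard ≤ m := by
        rw [hCA]
        exact (hCM A hA).2
      rw [hkey]
      exact ⟨finite_symmDiff hYfin hXfin, by omega⟩
    exact Nat.find_min hex (show m - 1 < Nat.find hex by omega) hpred
  -- the majority-vote set over M
  set S : Set Ω := {x | M.ncard < 2 * {C | C ∈ M ∧ x ∈ C}.ncard} with hSdef
  have hcnt : ∀ k ∈ K, ∀ x : Ω,
      {C | C ∈ M ∧ (Equiv.symm k) x ∈ C}.ncard = {C | C ∈ M ∧ x ∈ C}.ncard := by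
    intro k hk x
    have himg : (fun C => ⇑k '' C) '' {C | C ∈ M ∧ (Equiv.symm k) x ∈ C}
        = {C | C ∈ M ∧ x ∈ C} := by
      ext C'
      constructor
      · rintro ⟨C, ⟨hCM, hxC⟩, rfl⟩
        exact ⟨hMinv k hk C hCM, ⟨(Equiv.symm k) x, hxC, by simp⟩⟩
      · rintro ⟨hC'M, hxC'⟩
        refine ⟨⇑k⁻¹ '' C', ⟨hMinv k⁻¹ (inv_mem hk) C' hC'M, ⟨x, hxC', rfl⟩⟩, ?_⟩
        simp only []
        rw [← Set.image_comp]
        simp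
    rw [← himg, Set.ncard_image_of_injective _ (Set.image_injective.mpr k.injective)]
  refine ⟨S, ?_, ?_⟩
  · intro k hk
    ext x
    rw [Set.mem_image_equiv]
    show M.ncard < 2 * {C | C ∈ M ∧ (Equiv.symm k) x ∈ C}.ncard ↔
      M.ncard < 2 * {C | C ∈ M ∧ x ∈ C}.ncard
    rw [hcnt k hk x]
  · intro A hA
    have hCC₀fin : ∀ C ∈ M, (symmDiff C C₀).Finite := by
      intro C hC
      have h1 : (symmDiff C A₀).Finite := (hC A₀ hA₀).1
      have h2 : (symmDiff A₀ C₀).Finite := by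
        rw [symmDiff_comm]
        exact (hC₀M A₀ hA₀).1
      exact (h1.union h2).subset (symmDiff_triangle C A₀ C₀)
    have hSC₀ : (symmDiff S C₀).Finite := by
      have hsub : symmDiff S C₀ ⊆ ⋃ C ∈ M, symmDiff C C₀ := by
        intro x hx
        by_contra hx'
        have hagree : ∀ C ∈ M, (x ∈ C ↔ x ∈ C₀) := by
          intro C hC
          by_contra hcon
          apply hx'
          refine Set.mem_biUnion hC ?_
          rw [Set.mem_symmDiff]
          tauto
        rw [Set.mem_symmDiff] at hx
        rcases hx with ⟨hxS, hxC₀⟩ | ⟨hxC₀, hxS⟩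
        · have hempty : {C | C ∈ M ∧ x ∈ C} = ∅ := by
            ext C
            simp only [Set.mem_setOf_eq, Set.mem_empty_iff_false, iff_false, not_and]
            intro hC hxC
            exact hxC₀ ((hagree C hC).mp hxC)
          have hxS' : M.ncard < 2 * {C | C ∈ M ∧ x ∈ C}.ncard := hxS
          rw [hempty] at hxS'
          simp [Set.ncard_empty] at hxS'
        · have hfull : {C | C ∈ M ∧ x ∈ C} = M := by
            ext C
            simp only [Set.mem_setOf_eq]
            exact ⟨fun h => h.1, fun h => ⟨h, (hagree C h).mpr hxC₀⟩⟩
          apply hxS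
          show M.ncard < 2 * {C | C ∈ M ∧ x ∈ C}.ncard
          rw [hfull]
          have hpos : 0 < M.ncard := (Set.ncard_pos hMfin).mpr ⟨C₀, hC₀M⟩
          omega
      exact (Set.Finite.biUnion hMfin hCC₀fin).subset hsub
    exact (hSC₀.union (hC₀M A hA).1).subset (symmDiff_triangle S C₀ A)
end

section
/- Let V be a vector space over a field k, Γ a group of linear automorphisms of V, and F a nonempty Γ-invariant family of subspaces of V such that there is a finite bound n with dim(U/(U ∩ W)) ≤ n for all U, W ∈ F. Then there exists a Γ-invariant subspace N of V such that dim(N/(N ∩ U)) and dim(U/(N ∩ U)) are finite for every U ∈ F. -/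
set_option maxHeartbeats 1000000
set_option synthInstance.maxHeartbeats 1000000

open Cardinal Submodule

namespace SchlichtingAux

variable {k V : Type*} [Field k] [AddCommGroup V] [Module k V]

/-- The induced map on quotients from an inclusion of submodules. -/
noncomputable def qIncl (Z S W : Submodule k V) (h : Z ≤ S) :
    (Z ⧸ comap Z.subtype W) →ₗ[k] (S ⧸ comap S.subtype W) :=
  Submodule.liftQ _ ((comap S.subtype W).mkQ.comp (Submodule.inclusion h))
    (by
      intro x hx
      simp only [LinearMap.mem_ker, LinearMap.comp_apply, Submodule.mkQ_apply,
        Submodule.Quotient.mk_eq_zero, Submodule.mem_comap]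
      exact hx)

@[simp] lemma qIncl_mk (Z S W : Submodule k V) (h : Z ≤ S) (x : Z) :
    qIncl Z S W h (Submodule.Quotient.mk x) = Submodule.Quotient.mk (Submodule.inclusion h x) :=
  rfl

lemma qIncl_injective (Z S W : Submodule k V) (h : Z ≤ S) :
    Function.Injective (qIncl Z S W h) := by
  rw [← LinearMap.ker_eq_bot]
  apply Submodule.ker_liftQ_eq_bot
  intro x hx
  simp only [LinearMap.mem_ker, LinearMap.comp_apply, Submodule.mkQ_apply,
    Submodule.Quotient.mk_eq_zero, Submodule.mem_comap] at hx
  exact hx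

lemma rank_mono {Z S : Submodule k V} (W : Submodule k V) (h : Z ≤ S) :
    Module.rank k (Z ⧸ comap Z.subtype W) ≤ Module.rank k (S ⧸ comap S.subtype W) :=
  (qIncl Z S W h).rank_le_of_injective (qIncl_injective Z S W h)

lemma rank_antitone {S W W' : Submodule k V} (h : W ≤ W') :
    Module.rank k (S ⧸ comap S.subtype W') ≤ Module.rank k (S ⧸ comap S.subtype W) := by
  have hle : comap S.subtype W ≤ comap S.subtype W' := comap_mono h
  apply (Submodule.mapQ (comap S.subtype W) (comap S.subtype W') LinearMap.id
    (fun x hx => hle hx)).rank_le_of_surjective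
  intro y
  obtain ⟨x, rfl⟩ := Submodule.Quotient.mk_surjective _ y
  exact ⟨Submodule.Quotient.mk x, by simp [Submodule.mapQ_apply]⟩

/-- If the quotient of `S` by `W` is no bigger than that of `Z ≤ S`, then `S ≤ Z ⊔ W`. -/
lemma le_sup_of_finrank_le {Z S W : Submodule k V} (h : Z ≤ S)
    [FiniteDimensional k (Z ⧸ comap Z.subtype W)]
    [FiniteDimensional k (S ⧸ comap S.subtype W)]
    (hrk : Module.finrank k (S ⧸ comap S.subtype W) ≤
      Module.finrank k (Z ⧸ comap Z.subtype W)) :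
    S ≤ Z ⊔ W := by
  have hinj := qIncl_injective Z S W h
  have h1 : Module.finrank k (LinearMap.range (qIncl Z S W h)) =
      Module.finrank k (Z ⧸ comap Z.subtype W) := LinearMap.finrank_range_of_inj hinj
  have htop : LinearMap.range (qIncl Z S W h) = ⊤ := by
    apply Submodule.eq_top_of_finrank_eq
    refine le_antisymm (Submodule.finrank_le _) ?_
    rw [h1]
    exact hrk
  have hsurj : Function.Surjective (qIncl Z S W h) := LinearMap.range_eq_top.mp htop
  intro s hs
  obtain ⟨q, hq⟩ := hsurj (Submodule.Quotient.mk ⟨s, hs⟩)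
  obtain ⟨z, rfl⟩ := Submodule.Quotient.mk_surjective _ q
  rw [qIncl_mk] at hq
  have hd : Submodule.inclusion h z - (⟨s, hs⟩ : S) ∈ comap S.subtype W :=
    (Submodule.Quotient.eq _).mp hq
  have hzW : (z : V) - s ∈ W := hd
  have heq : s = (z : V) - ((z : V) - s) := (sub_sub_cancel _ _).symm
  rw [heq]
  exact sub_mem (Submodule.mem_sup_left z.2) (Submodule.mem_sup_right hzW)


lemma rank_quot_inf_le_core {M : Type*} [AddCommGroup M] [Module k M] (A B : Submodule k M) :
    Module.rank k (M ⧸ (A ⊓ B)) ≤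
      Module.rank k (M ⧸ A) + Module.rank k (A ⧸ comap A.subtype B) := by
  have h1 : A ⊓ B ≤ A := inf_le_left
  have key := Submodule.rank_quotient_add_rank (R := k) (M := M ⧸ (A ⊓ B)) (A.map (A ⊓ B).mkQ)
  have e1 : Module.rank k ((M ⧸ (A ⊓ B)) ⧸ (A.map (A ⊓ B).mkQ)) = Module.rank k (M ⧸ A) :=
    (Submodule.quotientQuotientEquivQuotient (A ⊓ B) A h1).rank_eq
  have e2 : Module.rank k (A.map (A ⊓ B).mkQ) = Module.rank k (A ⧸ comap A.subtype B) := by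
    set f : A →ₗ[k] (M ⧸ (A ⊓ B)) := (A ⊓ B).mkQ.comp A.subtype with hf
    have hker : LinearMap.ker f = comap A.subtype B := by
      ext x
      simp [hf, Submodule.Quotient.mk_eq_zero, x.2]
    have hrange : LinearMap.range f = A.map (A ⊓ B).mkQ := by
      rw [hf, LinearMap.range_comp, Submodule.range_subtype]
    have e := f.quotKerEquivRange.rank_eq
    rw [hker, hrange] at e
    exact e.symm
  rw [← e1, ← e2]
  exact le_of_eq key.symm

lemma rank_comap_quot_eq {S X : Submodule k V} (Y : Submodule k V) (hXS : X ≤ S) :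
    Module.rank k ((comap S.subtype X) ⧸
        comap (comap S.subtype X).subtype (comap S.subtype Y)) =
      Module.rank k (X ⧸ comap X.subtype Y) := by
  refine (Submodule.Quotient.equiv _ _ (Submodule.comapSubtypeEquivOfLe hXS) ?_).rank_eq
  ext x
  constructor
  · rintro ⟨a, ha, rfl⟩
    simp only [Submodule.mem_comap] at ha ⊢
    simpa using ha
  · intro hx
    refine ⟨⟨⟨(x : V), hXS x.2⟩, x.2⟩, hx, ?_⟩
    apply Subtype.ext
    simp

lemma rank_quot_inf_le {S X : Submodule k V} (Y : Submodule k V) (hXS : X ≤ S) :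
    Module.rank k (S ⧸ comap S.subtype (X ⊓ Y)) ≤
      Module.rank k (S ⧸ comap S.subtype X) + Module.rank k (X ⧸ comap X.subtype Y) := by
  have hc : comap S.subtype (X ⊓ Y) = comap S.subtype X ⊓ comap S.subtype Y :=
    Submodule.comap_inf _ _ _
  rw [hc, ← rank_comap_quot_eq (k := k) Y hXS]
  exact rank_quot_inf_le_core _ _

/-- Transport of relative quotients along a linear automorphism. -/
lemma rank_map_quot_eq (e : V ≃ₗ[k] V) (X W : Submodule k V) :
    Module.rank k ((X.map (e : V →ₗ[k] V)) ⧸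
        comap (X.map (e : V →ₗ[k] V)).subtype (W.map (e : V →ₗ[k] V))) =
      Module.rank k (X ⧸ comap X.subtype W) := by
  refine ((Submodule.Quotient.equiv _ _ (e.submoduleMap X) ?_).rank_eq).symm
  ext y
  constructor
  · rintro ⟨a, ha, rfl⟩
    simp only [Submodule.mem_comap] at ha ⊢
    exact ⟨(a : V), ha, by simp [LinearEquiv.submoduleMap_apply]⟩
  · intro hy
    simp only [Submodule.mem_comap, Submodule.coe_subtype, Submodule.mem_map] at hy
    obtain ⟨w, hw, hwy⟩ := hy
    obtain ⟨x, hx, hxy⟩ := y.2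
    refine ⟨⟨x, hx⟩, ?_, ?_⟩
    · have hxw : x = w := e.injective (show e x = e w from hxy.trans hwy.symm)
      simpa [hxw] using hw
    · apply Subtype.ext
      simpa using hxy

/-- The equivalence between relative quotients transported along an automorphism. -/
noncomputable def quotMapEquiv (e : V ≃ₗ[k] V) (X W : Submodule k V) :
    (X ⧸ comap X.subtype W) ≃ₗ[k]
      ((X.map (e : V →ₗ[k] V)) ⧸
        comap (X.map (e : V →ₗ[k] V)).subtype (W.map (e : V →ₗ[k] V))) := by
  refine Submodule.Quotient.equiv _ _ (e.submoduleMap X) ?_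
  ext y
  constructor
  · rintro ⟨a, ha, rfl⟩
    simp only [Submodule.mem_comap] at ha ⊢
    exact ⟨(a : V), ha, by simp [LinearEquiv.submoduleMap_apply]⟩
  · intro hy
    simp only [Submodule.mem_comap, Submodule.coe_subtype, Submodule.mem_map] at hy
    obtain ⟨w, hw, hwy⟩ := hy
    obtain ⟨x, hx, hxy⟩ := y.2
    refine ⟨⟨x, hx⟩, ?_, ?_⟩
    · have hxw : x = w := e.injective (show e x = e w from hxy.trans hwy.symm)
      simpa [hxw] using hw
    · apply Subtype.ext
      simpa using hxy

/-- The closure of a family of submodules under finite intersections. -/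
inductive IC (𝔉 : Set (Submodule k V)) : Submodule k V → Prop
  | base {U : Submodule k V} : U ∈ 𝔉 → IC 𝔉 U
  | inter {X U : Submodule k V} : IC 𝔉 X → U ∈ 𝔉 → IC 𝔉 (X ⊓ U)

variable {𝔉 : Set (Submodule k V)}

lemma IC.le_member {X : Submodule k V} (h : IC 𝔉 X) : ∃ A ∈ 𝔉, X ≤ A := by
  induction h with
  | base hU => exact ⟨_, hU, le_rfl⟩
  | inter _ _ ih =>
    obtain ⟨A, hA, hle⟩ := ih
    exact ⟨A, hA, inf_le_left.trans hle⟩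

lemma IC.inf {X Y : Submodule k V} (hX : IC 𝔉 X) (hY : IC 𝔉 Y) : IC 𝔉 (X ⊓ Y) := by
  induction hY with
  | base hU => exact hX.inter hU
  | @inter Y U _ hU ih =>
    rw [← inf_assoc]
    exact ih.inter hU

lemma IC.rank_le {n : ℕ}
    (hbound : ∀ U ∈ 𝔉, ∀ W ∈ 𝔉, Module.rank k (↥U ⧸ comap U.subtype W) ≤ n)
    {X : Submodule k V} (hX : IC 𝔉 X) {W : Submodule k V} (hW : W ∈ 𝔉) :
    Module.rank k (X ⧸ comap X.subtype W) ≤ n := by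
  obtain ⟨A, hA, hle⟩ := hX.le_member
  exact (rank_mono W hle).trans (hbound A hA W hW)

lemma IC.rank_rev_le {n : ℕ}
    (hbound : ∀ U ∈ 𝔉, ∀ W ∈ 𝔉, Module.rank k (↥U ⧸ comap U.subtype W) ≤ n)
    {X : Submodule k V} (hX : IC 𝔉 X) :
    ∃ C : ℕ, ∀ W ∈ 𝔉, Module.rank k (W ⧸ comap W.subtype X) ≤ C := by
  induction hX with
  | @base U hU => exact ⟨n, fun W hW => hbound W hW U hU⟩
  | @inter X U hX hU ih =>
    obtain ⟨C, hC⟩ := ih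
    refine ⟨C + n, fun W hW => ?_⟩
    have h1 : comap W.subtype (X ⊓ U) = comap W.subtype ((X ⊓ W) ⊓ U) := by
      ext x
      have hx := x.2
      simp only [Submodule.mem_comap, Submodule.coe_subtype, Submodule.mem_inf]
      tauto
    have h4 : comap W.subtype (X ⊓ W) = comap W.subtype X := by
      ext x
      have hx := x.2
      simp only [Submodule.mem_comap, Submodule.coe_subtype, Submodule.mem_inf]
      tauto
    have h2 := rank_quot_inf_le (k := k) U (inf_le_right : X ⊓ W ≤ W)
    rw [h4] at h2
    have h3 : Module.rank k (↥(X ⊓ W) ⧸ comap (X ⊓ W).subtype U) ≤ (n : Cardinal) :=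
      (rank_mono U inf_le_right).trans (hbound W hW U hU)
    rw [h1]
    refine h2.trans ?_
    have := add_le_add (hC W hW) h3
    refine this.trans ?_
    rw [Nat.cast_add]

lemma IC.map {e : V ≃ₗ[k] V} (he : ∀ U ∈ 𝔉, U.map (e : V →ₗ[k] V) ∈ 𝔉)
    {X : Submodule k V} (hX : IC 𝔉 X) : IC 𝔉 (X.map (e : V →ₗ[k] V)) := by
  induction hX with
  | base hU => exact .base (he _ hU)
  | @inter X U _ hU ih =>
    have : (X ⊓ U).map (e : V →ₗ[k] V) =
        X.map (e : V →ₗ[k] V) ⊓ U.map (e : V →ₗ[k] V) := by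
      rw [Submodule.map_equiv_eq_comap_symm, Submodule.map_equiv_eq_comap_symm,
        Submodule.map_equiv_eq_comap_symm, Submodule.comap_inf]
    rw [this]
    exact ih.inter (he _ hU)

end SchlichtingAux
open SchlichtingAux in
/-- Vector space version of Schlichting's Theorem. -/
theorem schlichting_vector_space {k V : Type*} [Field k] [AddCommGroup V] [Module k V]
    (Γ : Subgroup (V ≃ₗ[k] V)) (𝔉 : Set (Submodule k V)) (hne : 𝔉.Nonempty)
    (hinv : ∀ γ ∈ Γ, ∀ U ∈ 𝔉, U.map (γ : V →ₗ[k] V) ∈ 𝔉)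
    (n : ℕ)
    (hbound : ∀ U ∈ 𝔉, ∀ W ∈ 𝔉,
      Module.rank k (↥U ⧸ Submodule.comap U.subtype W) ≤ n) :
    ∃ N : Submodule k V, (∀ γ ∈ Γ, N.map (γ : V →ₗ[k] V) = N) ∧
      ∀ U ∈ 𝔉,
        Module.rank k (↥N ⧸ Submodule.comap N.subtype U) < ℵ₀ ∧
        Module.rank k (↥U ⧸ Submodule.comap U.subtype N) < ℵ₀ := by
  classical
  obtain ⟨U₀, hU₀⟩ := hne
  -- all relative quotients of members of the intersection closure are finite dimensional
  have hfdXW : ∀ (X : Submodule k V), IC 𝔉 X → ∀ W ∈ 𝔉,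
      FiniteDimensional k (↥X ⧸ Submodule.comap X.subtype W) := by
    intro X hX W hW
    have h := hX.rank_le hbound hW
    exact Module.rank_lt_aleph0_iff.mp (h.trans_lt (Cardinal.nat_lt_aleph0 n))
  have hfrXW : ∀ (X : Submodule k V), IC 𝔉 X → ∀ W ∈ 𝔉,
      Module.finrank k (↥X ⧸ Submodule.comap X.subtype W) ≤ n := by
    intro X hX W hW
    exact Module.finrank_le_of_rank_le (hX.rank_le hbound hW)
  -- the invariant `j`
  set j : Submodule k V → ℕ :=
    fun X => sSup ((fun W => Module.finrank k (↥X ⧸ Submodule.comap X.subtype W)) '' 𝔉) with hj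
  have hjbdd : ∀ (X : Submodule k V), IC 𝔉 X →
      BddAbove ((fun W => Module.finrank k (↥X ⧸ Submodule.comap X.subtype W)) '' 𝔉) := by
    intro X hX
    refine ⟨n, ?_⟩
    rintro d ⟨W, hW, rfl⟩
    exact hfrXW X hX W hW
  have hjge : ∀ (X : Submodule k V), IC 𝔉 X → ∀ W ∈ 𝔉,
      Module.finrank k (↥X ⧸ Submodule.comap X.subtype W) ≤ j X := by
    intro X hX W hW
    exact le_csSup (hjbdd X hX) ⟨W, hW, rfl⟩
  have hjwit : ∀ (X : Submodule k V), IC 𝔉 X → ∃ W ∈ 𝔉,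
      Module.finrank k (↥X ⧸ Submodule.comap X.subtype W) = j X := by
    intro X hX
    have := Nat.sSup_mem (Set.Nonempty.image _ ⟨U₀, hU₀⟩) (hjbdd X hX)
    obtain ⟨W, hW, hWe⟩ := this
    exact ⟨W, hW, hWe⟩
  have hjmono : ∀ (X Y : Submodule k V), IC 𝔉 X → IC 𝔉 Y → X ≤ Y → j X ≤ j Y := by
    intro X Y hX hY hle
    refine csSup_le (Set.Nonempty.image _ ⟨U₀, hU₀⟩) ?_
    rintro d ⟨W, hW, rfl⟩
    refine le_trans ?_ (hjge Y hY W hW)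
    have := hfdXW Y hY W hW
    exact Module.finrank_le_finrank_of_rank_le_rank
      (by simpa using rank_mono (k := k) W hle)
      ((hY.rank_le hbound hW).trans_lt (Cardinal.nat_lt_aleph0 n))
  -- the minimal value of `j`
  set m : ℕ := sInf (j '' {X | IC 𝔉 X}) with hm
  have hmmem := Nat.sInf_mem (s := j '' {X | IC 𝔉 X}) ⟨j U₀, ⟨U₀, IC.base hU₀, rfl⟩⟩
  obtain ⟨M, hMIC, hjM0⟩ := hmmem
  have hjM : j M = m := hjM0
  have hm_le : ∀ (X : Submodule k V), IC 𝔉 X → m ≤ j X := by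
    intro X hX
    exact Nat.sInf_le ⟨X, hX, rfl⟩
  -- the family of minimizers and its span
  set 𝒦 : Set (Submodule k V) := {X | IC 𝔉 X ∧ j X ≤ m} with h𝒦
  set N : Submodule k V := sSup 𝒦 with hN
  have hM𝒦 : M ∈ 𝒦 := ⟨hMIC, hjM.le⟩
  have hMN : M ≤ N := le_sSup hM𝒦
  -- the uniform bound for quotients by M
  obtain ⟨C, hC⟩ := hMIC.rank_rev_le hbound
  -- Key step: N/(N ∩ M) has dimension at most C
  have key : Module.rank k (↥N ⧸ Submodule.comap N.subtype M) ≤ (C : Cardinal) := by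
    apply _root_.rank_le
    intro s hs
    -- choose representatives in N
    have hlift0 : ∀ y : ↥N ⧸ Submodule.comap N.subtype M,
        ∃ x : ↥N, Submodule.Quotient.mk x = y := Submodule.Quotient.mk_surjective _
    choose lift hlift using hlift0
    -- each representative lies in a finite sub-supremum of 𝒦
    have hfin : ∀ y : ↥s, ∃ t : Finset ↥𝒦,
        ((lift ↑y : ↥N) : V) ∈ ⨆ X ∈ t, (X : Submodule k V) := by
      intro y
      have h1 : ((lift ↑y : ↥N) : V) ∈ ⨆ X : ↥𝒦, (X : Submodule k V) := by
        rw [← sSup_eq_iSup']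
        exact (lift ↑y).2
      exact (Submodule.mem_iSup_iff_exists_finset).mp h1
    choose t ht using hfin
    set T : Finset ↥𝒦 := s.attach.biUnion t with hT
    set Z : Submodule k V := M ⊓ T.inf Subtype.val with hZdef
    have hZIC : IC 𝔉 Z := by
      have hgen : ∀ T' : Finset ↥𝒦, IC 𝔉 (M ⊓ T'.inf Subtype.val) := by
        intro T'
        induction T' using Finset.induction_on with
        | empty => simpa using hMIC
        | @insert X T'' hXmem ih =>
          rw [Finset.inf_insert,
            show M ⊓ ((X : Submodule k V) ⊓ T''.inf Subtype.val) =
              (M ⊓ T''.inf Subtype.val) ⊓ (X : Submodule k V) by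
                rw [inf_comm (a := (X : Submodule k V)), inf_assoc]]
          exact IC.inf ih X.2.1
      exact hgen T
    have hZM : Z ≤ M := inf_le_left
    have hZT : ∀ X : ↥𝒦, X ∈ T → Z ≤ (X : Submodule k V) := fun X hX =>
      inf_le_right.trans (Finset.inf_le hX)
    have hjZ : j Z = m := le_antisymm (hjM ▸ hjmono Z M hZIC hMIC hZM) (hm_le Z hZIC)
    obtain ⟨W, hW, hWwit⟩ := hjwit Z hZIC
    -- every element of 𝒦 that contains Z is inside Z ⊔ W
    have hsub : ∀ X : Submodule k V, IC 𝔉 X → j X ≤ m → Z ≤ X → X ≤ Z ⊔ W := by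
      intro X hXIC hXj hZX
      haveI i1 := hfdXW Z hZIC W hW
      haveI i2 := hfdXW X hXIC W hW
      refine le_sup_of_finrank_le hZX ?_
      rw [hWwit, hjZ]
      exact (hjge X hXIC W hW).trans hXj
    -- all representatives live in M ⊔ W
    have hrep : ∀ y : ↥s, ((lift ↑y : ↥N) : V) ∈ M ⊔ W := by
      intro y
      have h2 : (⨆ X ∈ t y, (X : Submodule k V)) ≤ M ⊔ W := by
        refine iSup_le fun X => iSup_le fun hX => ?_
        have hXT : X ∈ T := Finset.mem_biUnion.mpr ⟨y, s.mem_attach y, hX⟩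
        refine (hsub X X.2.1 X.2.2 (hZT X hXT)).trans ?_
        exact sup_le (hZM.trans le_sup_left) le_sup_right
      exact h2 (ht y)
    -- the quotient (M ⊔ W)/M has dimension at most C
    have hPrank : Module.rank k (↥(M ⊔ W) ⧸ Submodule.comap (M ⊔ W).subtype M)
        ≤ (C : Cardinal) := by
      rw [sup_comm M W]
      have e := LinearMap.quotientInfEquivSupQuotient W M
      rw [← e.rank_eq]
      have hcc : Submodule.comap W.subtype W ⊓ Submodule.comap W.subtype M = Submodule.comap W.subtype M := by
        ext x
        have hx := x.2
        simp only [Submodule.mem_comap, Submodule.coe_subtype, Submodule.mem_inf]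
        tauto
      rw [hcc]
      exact hC W hW
    have hPfd : FiniteDimensional k (↥(M ⊔ W) ⧸ Submodule.comap (M ⊔ W).subtype M) :=
      Module.rank_lt_aleph0_iff.mp (hPrank.trans_lt (Cardinal.nat_lt_aleph0 C))
    -- transfer linear independence
    set v : ↥s → (↥(M ⊔ W) ⧸ Submodule.comap (M ⊔ W).subtype M) :=
      fun y => Submodule.Quotient.mk ⟨((lift ↑y : ↥N) : V), hrep y⟩ with hv
    have hvli : LinearIndependent k v := by
      rw [Fintype.linearIndependent_iff]
      intro g hg
      have h0 : (Submodule.comap (M ⊔ W).subtype M).mkQ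
          (∑ y : ↥s, g y • (⟨((lift ↑y : ↥N) : V), hrep y⟩ : ↥(M ⊔ W))) = 0 := by
        rw [map_sum]
        simp only [map_smul, Submodule.mkQ_apply]
        exact hg
      rw [Submodule.mkQ_apply, Submodule.Quotient.mk_eq_zero] at h0
      rw [Submodule.mem_comap, map_sum] at h0
      simp only [map_smul, Submodule.subtype_apply] at h0
      have hVsum : (∑ y : ↥s, g y • ((lift ↑y : ↥N) : V)) ∈ M := h0
      have hNsum : (∑ y : ↥s, g y • (lift ↑y : ↥N)) ∈ Submodule.comap N.subtype M := by
        rw [Submodule.mem_comap, map_sum]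
        simp only [map_smul, Submodule.subtype_apply]
        exact hVsum
      have hfinal : ∑ y : ↥s, g y • ((y : ↥N ⧸ Submodule.comap N.subtype M)) = 0 := by
        have h2 : (Submodule.comap N.subtype M).mkQ (∑ y : ↥s, g y • lift ↑y) = 0 := by
          rw [Submodule.mkQ_apply, Submodule.Quotient.mk_eq_zero]
          exact hNsum
        rw [map_sum] at h2
        simp only [map_smul, Submodule.mkQ_apply, hlift] at h2
        exact h2
      exact Fintype.linearIndependent_iff.mp hs g hfinal
    have hcard := hvli.fintype_card_le_finrank
    have hfrP : Module.finrank k (↥(M ⊔ W) ⧸ Submodule.comap (M ⊔ W).subtype M) ≤ C :=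
      Module.finrank_le_of_rank_le hPrank
    calc s.card = Fintype.card ↥s := (Fintype.card_coe s).symm
      _ ≤ Module.finrank k (↥(M ⊔ W) ⧸ Submodule.comap (M ⊔ W).subtype M) := hcard
      _ ≤ C := hfrP
  -- invariance of j under Γ
  have hjmapall : ∀ e : V ≃ₗ[k] V, e ∈ Γ → ∀ X : Submodule k V, IC 𝔉 X →
      j (X.map (e : V →ₗ[k] V)) = j X := by
    intro e he X hX
    simp only [hj]
    apply congrArg sSup
    ext d
    simp only [Set.mem_image]
    constructor
    · rintro ⟨W, hW, rfl⟩
      have hW' : W.map ((e.symm : V ≃ₗ[k] V) : V →ₗ[k] V) ∈ 𝔉 :=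
        hinv e⁻¹ (Γ.inv_mem he) W hW
      refine ⟨W.map ((e.symm : V ≃ₗ[k] V) : V →ₗ[k] V), hW', ?_⟩
      have hWW : (W.map ((e.symm : V ≃ₗ[k] V) : V →ₗ[k] V)).map (e : V →ₗ[k] V) = W := by
        rw [Submodule.map_equiv_eq_comap_symm e.symm]
        simp only [LinearEquiv.symm_symm]
        exact Submodule.map_comap_eq_of_surjective (fun y => ⟨e.symm y, by simp⟩) W
      rw [LinearEquiv.finrank_eq (quotMapEquiv e X (W.map ((e.symm : V ≃ₗ[k] V) : V →ₗ[k] V))), hWW]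
    · rintro ⟨W, hW, rfl⟩
      exact ⟨W.map (e : V →ₗ[k] V), hinv e he W hW,
        (LinearEquiv.finrank_eq (quotMapEquiv e X W)).symm⟩
  refine ⟨N, ?_, ?_⟩
  · -- Γ-invariance of N
    intro γ hγ
    have h1 : N.map (γ : V →ₗ[k] V) = sSup ((fun X => X.map (γ : V →ₗ[k] V)) '' 𝒦) := by
      rw [hN, sSup_eq_iSup', Submodule.map_iSup, sSup_image']
    have h2 : (fun X => X.map (γ : V →ₗ[k] V)) '' 𝒦 = 𝒦 := by
      apply Set.Subset.antisymm
      · rintro _ ⟨X, hX, rfl⟩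
        exact ⟨hX.1.map (hinv γ hγ), by rw [hjmapall γ hγ X hX.1]; exact hX.2⟩
      · intro X hX
        refine ⟨X.map ((γ.symm : V ≃ₗ[k] V) : V →ₗ[k] V), ?_, ?_⟩
        · have hIC : IC 𝔉 (X.map ((γ.symm : V ≃ₗ[k] V) : V →ₗ[k] V)) :=
            hX.1.map (fun U hU => by
              have : γ⁻¹ ∈ Γ := Γ.inv_mem hγ
              exact hinv γ⁻¹ this U hU)
          refine ⟨hIC, ?_⟩
          have : γ⁻¹ ∈ Γ := Γ.inv_mem hγ
          rw [show ((γ.symm : V ≃ₗ[k] V) : V →ₗ[k] V) = ((γ⁻¹ : V ≃ₗ[k] V) : V →ₗ[k] V) from rfl,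
            hjmapall γ⁻¹ this X hX.1]
          exact hX.2
        · show (X.map ((γ.symm : V ≃ₗ[k] V) : V →ₗ[k] V)).map ((γ : V ≃ₗ[k] V) : V →ₗ[k] V) = X
          rw [Submodule.map_equiv_eq_comap_symm γ.symm]
          simp only [LinearEquiv.symm_symm]
          exact Submodule.map_comap_eq_of_surjective (fun y => ⟨γ.symm y, by simp⟩) X
    rw [h1, h2]
  · -- commensurability with every member
    intro U hU
    constructor
    · have h1 : Module.rank k (↥N ⧸ Submodule.comap N.subtype U) ≤
          Module.rank k (↥N ⧸ Submodule.comap N.subtype (M ⊓ U)) :=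
        rank_antitone inf_le_right
      have h2 := rank_quot_inf_le (k := k) (S := N) (X := M) U hMN
      have h3 : Module.rank k (↥M ⧸ Submodule.comap M.subtype U) ≤ (n : Cardinal) :=
        hMIC.rank_le hbound hU
      refine (h1.trans (h2.trans (add_le_add key h3))).trans_lt ?_
      exact Cardinal.add_lt_aleph0 (Cardinal.nat_lt_aleph0 C) (Cardinal.nat_lt_aleph0 n)
    · have h1 : Module.rank k (↥U ⧸ Submodule.comap U.subtype N) ≤
          Module.rank k (↥U ⧸ Submodule.comap U.subtype M) :=
        rank_antitone hMN
      exact (h1.trans (hC U hU)).trans_lt (Cardinal.nat_lt_aleph0 C)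
end

section
/- Let G be a group, S ≤ T subgroups, and F a subgroup commensurable with both. If T ⊆ SF (so SF = TF as sets), then ⋂_{s ∈ S} s⁻¹(SF)s = ⋂_{t ∈ T} t⁻¹(TF)t. -/
open Pointwise

/-- If `S ≤ T` are subgroups commensurable with `F` and `T ⊆ SF`, then
`⋂_{s ∈ S} s⁻¹(SF)s = ⋂_{t ∈ T} t⁻¹(TF)t`. -/
theorem increment_eq_of_sub {G : Type*} [Group G] (S T F : Subgroup G)
    (hST : S ≤ T) (hSF : Subgroup.Commensurable S F) (hTF : Subgroup.Commensurable T F)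
    (hsub : (T : Set G) ⊆ (S : Set G) * (F : Set G)) :
    ⋂ s ∈ (S : Set G), (fun x => s⁻¹ * x * s) '' ((S : Set G) * (F : Set G)) =
    ⋂ t ∈ (T : Set G), (fun x => t⁻¹ * x * t) '' ((T : Set G) * (F : Set G)) := by
  have hXeq : (S : Set G) * (F : Set G) = (T : Set G) * (F : Set G) := by
    apply Set.Subset.antisymm
    · exact Set.mul_subset_mul_right hST
    · rintro x ⟨t, ht, f, hf, rfl⟩
      obtain ⟨s, hs, f', hf', hsf⟩ := hsub ht
      exact ⟨s, hs, f' * f, mul_mem hf' hf, by rw [← hsf]; group⟩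
  set X : Set G := (T : Set G) * (F : Set G) with hX
  have leftT : ∀ t ∈ T, ∀ y : G, t * y ∈ X ↔ y ∈ X := by
    have fwd : ∀ t ∈ T, ∀ y : G, y ∈ X → t * y ∈ X := by
      rintro t ht y ⟨t', ht', f, hf, rfl⟩
      exact ⟨t * t', mul_mem ht ht', f, hf, by group⟩
    intro t ht y
    refine ⟨fun h => ?_, fwd t ht y⟩
    have := fwd t⁻¹ (inv_mem ht) _ h
    simpa using this
  have rightF : ∀ f ∈ F, ∀ y : G, y * f ∈ X ↔ y ∈ X := by
    have fwd : ∀ f ∈ F, ∀ y : G, y ∈ X → y * f ∈ X := by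
      rintro f hf y ⟨t', ht', f', hf', rfl⟩
      exact ⟨t', ht', f' * f, mul_mem hf' hf, by group⟩
    intro f hf y
    refine ⟨fun h => ?_, fwd f hf y⟩
    have := fwd f⁻¹ (inv_mem hf) _ h
    simpa [mul_assoc] using this
  have himg : ∀ (g : G), g ∈ T → ∀ x : G,
      (x ∈ (fun y => g⁻¹ * y * g) '' X ↔ x * g⁻¹ ∈ X) := by
    intro g hg x
    constructor
    · rintro ⟨y, hy, rfl⟩
      have h1 : g⁻¹ * y * g * g⁻¹ = g⁻¹ * y := by group
      rw [h1]
      exact (leftT g⁻¹ (inv_mem hg) y).mpr hy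
    · intro h
      refine ⟨g * x * g⁻¹, ?_, by group⟩
      have := (leftT g hg (x * g⁻¹)).mpr h
      simpa [mul_assoc] using this
  rw [hXeq]
  ext x
  simp only [Set.mem_iInter]
  constructor
  · intro h t ht
    rw [himg t ht x]
    obtain ⟨s, hs, f, hf, hsf⟩ := hsub (inv_mem ht)
    have hx : x * s ∈ X := by
      have := h s⁻¹ (inv_mem hs)
      rw [himg s⁻¹ (inv_mem (hST hs)) x] at this
      simpa using this
    have hxf : x * (s * f) ∈ X := by
      rw [← mul_assoc]; exact (rightF f hf _).mpr hx
    have hsf' : s * f = t⁻¹ := hsf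
    rwa [hsf'] at hxf
  · intro h s hs
    have := h s (hST hs)
    rwa [himg s (hST hs) x, ← himg s (hST hs) x] at this
end

section
/- Let L/F be a Galois extension and F' an intermediate field of L/F with [L : F'] possibly infinite. If H = Gal(L/F') and H' ≤ Gal(L/F) is a closed subgroup commensurable with H (both indices [H : H ∩ H'] and [H' : H ∩ H'] finite), then the fixed field Fix_L(H') is commensurable with F' in the sense that [F'·Fix_L(H') : F'] and [F'·Fix_L(H') : Fix_L(H')] are finite. -/
open IntermediateField Polynomial Module MulAction



lemma mem_bot_of_fixed' {k L : Type*} [Field k] [Field L] [Algebra k L] [IsGalois k L]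
    (x : L) (hx : ∀ σ : L ≃ₐ[k] L, σ x = x) : x ∈ (⊥ : IntermediateField k L) := by
  classical
  have hint : IsIntegral k x := (Normal.isIntegral inferInstance x)
  set p := minpoly k x with hp
  have hsplits : Splits (p.map (algebraMap k L)) := Normal.splits inferInstance x
  set q := p.map (algebraMap k L) with hq
  have hall : ∀ y ∈ q.roots, y = x := by
    intro y hy
    have hq0 : q ≠ 0 := Polynomial.map_monic_ne_zero (minpoly.monic hint)
    have hroot : (aeval y) p = 0 := by
      have h0 : eval y q = 0 := (mem_roots hq0).mp hy
      simpa [hq, aeval_def, eval_map] using h0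
    have hpy : minpoly k y = minpoly k x :=
      Eq.symm <| minpoly.eq_of_irreducible_of_monic (p := minpoly k x)
        (minpoly.irreducible hint) hroot (minpoly.monic hint)
    obtain ⟨σ, hσ⟩ := (Normal.minpoly_eq_iff_mem_orbit (F := k) (E := L)).mp hpy
    have h1 : σ • x = y := hσ
    rw [← h1, show σ • x = σ x from rfl, hx σ]
  have hcard : p.natDegree = Multiset.card q.roots := by
    rw [← hsplits.natDegree_eq_card_roots, hq, natDegree_map]
  have hnodup : q.roots.Nodup :=
    nodup_roots (Polynomial.Separable.map (Algebra.IsSeparable.isSeparable k x))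
  have hrepl : q.roots = Multiset.replicate (Multiset.card q.roots) x :=
    Multiset.eq_replicate_card.mpr hall
  have hle1 : Multiset.card q.roots ≤ 1 := by
    have := (Multiset.nodup_iff_count_le_one.mp hnodup) x
    rwa [hrepl, Multiset.count_replicate_self] at this
  have hpos : 0 < p.natDegree := minpoly.natDegree_pos hint
  have hdeg1 : p.natDegree = 1 := by omega
  have := minpoly.natDegree_eq_one_iff.mp hdeg1
  rwa [IntermediateField.mem_bot]


lemma finiteDimensional_of_bddDeg {F E : Type*} [Field F] [Field E] [Algebra F E]
    [Algebra.IsSeparable F E] (n : ℕ) (h : ∀ x : E, (minpoly F x).natDegree ≤ n) :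
    FiniteDimensional F E := by
  have hint : ∀ x : E, IsIntegral F x := fun x => Algebra.IsSeparable.isIntegral F x
  have hfd : ∀ x : E, FiniteDimensional F F⟮x⟯ := fun x =>
    IntermediateField.adjoin.finiteDimensional (hint x)
  let f : E → ℕ := fun x => finrank F F⟮x⟯
  have hf : ∀ x, f x = (minpoly F x).natDegree := fun x =>
    IntermediateField.adjoin.finrank (hint x)
  have hbdd : BddAbove (Set.range f) := ⟨n, by rintro - ⟨x, rfl⟩; rw [hf]; exact h x⟩
  have hne : (Set.range f).Nonempty := ⟨f 0, 0, rfl⟩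
  obtain ⟨x, hx⟩ := Nat.sSup_mem hne hbdd
  have hmax : ∀ y : E, f y ≤ f x := fun y => hx ▸ le_csSup hbdd ⟨y, rfl⟩
  have htop : F⟮x⟯ = ⊤ := by
    refine top_le_iff.mp fun y _ => ?_
    let T : IntermediateField F E := F⟮x⟯ ⊔ F⟮y⟯
    have hT : FiniteDimensional F T := IntermediateField.finiteDimensional_sup _ _
    have hTs : Algebra.IsSeparable F T :=
      Algebra.isSeparable_tower_bot_of_isSeparable F T E
    obtain ⟨z, hz⟩ := Field.exists_primitive_element F T
    have hzT : F⟮(z : E)⟯ = T := by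
      simpa only [IntermediateField.lift_adjoin_simple, IntermediateField.lift_top]
        using congr_arg IntermediateField.lift hz
    have hxz : F⟮x⟯ ≤ F⟮(z : E)⟯ := by rw [hzT]; exact le_sup_left
    have hfin : finrank F F⟮(z : E)⟯ ≤ finrank F F⟮x⟯ := hmax _
    haveI : FiniteDimensional F F⟮(z : E)⟯ := hfd _
    have : F⟮x⟯ = F⟮(z : E)⟯ :=
      IntermediateField.eq_of_le_of_finrank_le hxz hfin
    have hyT : y ∈ T := (le_sup_right : F⟮y⟯ ≤ T) (mem_adjoin_simple_self F y)
    rw [this, hzT]; exact hyT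
  have := hfd x
  rw [htop] at this
  exact IntermediateField.topEquiv.toLinearEquiv.finiteDimensional


lemma minpoly_natDegree_le_of_orbit {F L : Type*} [Field F] [Field L] [Algebra F L]
    (G N : Subgroup (L ≃ₐ[F] L)) (hidx : (N.subgroupOf G).index ≠ 0)
    (x : L) (hx : x ∈ IntermediateField.fixedField N) :
    (minpoly (IntermediateField.fixedField G) x).natDegree ≤ (N.subgroupOf G).index := by
  classical
  haveI : (N.subgroupOf G).FiniteIndex := ⟨hidx⟩
  -- the stabilizer of x in G contains N.subgroupOf G
  have hstab : N.subgroupOf G ≤ MulAction.stabilizer G x := by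
    rintro ⟨σ, hσG⟩ hσN
    have : σ ∈ N := hσN
    exact hx ⟨σ, this⟩
  haveI : (MulAction.stabilizer G x).FiniteIndex :=
    Subgroup.finiteIndex_of_le hstab
  haveI hforb : Finite (MulAction.orbit G x) :=
    Finite.of_equiv _ (MulAction.orbitEquivQuotientStabilizer G x).symm
  have horbfin : (MulAction.orbit G x).Finite := Set.toFinite _
  set s : Finset L := horbfin.toFinset with hs
  have hcard : s.card ≤ (N.subgroupOf G).index := by
    have h1 : s.card = Nat.card (MulAction.orbit G x) := by
      rw [hs, ← Set.ncard_eq_toFinset_card _ horbfin, ← Nat.card_coe_set_eq]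
    have h2 : Nat.card (MulAction.orbit G x) = (MulAction.stabilizer G x).index := by
      rw [Nat.card_congr (MulAction.orbitEquivQuotientStabilizer G x),
        Subgroup.index_eq_card]
    rw [h1, h2]
    exact Nat.le_of_dvd (Nat.pos_of_ne_zero hidx) (Subgroup.index_dvd_of_le hstab)
  set P : L[X] := ∏ y ∈ s, (X - C y) with hP
  have hPmonic : P.Monic := monic_prod_of_monic _ _ fun y _ => monic_X_sub_C y
  have hPdeg : P.natDegree = s.card := by
    rw [hP, natDegree_prod_of_monic _ _ fun y _ => monic_X_sub_C y]
    simp [natDegree_X_sub_C]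
  -- coefficients of P are fixed by G
  have hcoeff : ∀ i, P.coeff i ∈ IntermediateField.fixedField G := by
    intro i
    intro g
    show g • P.coeff i = P.coeff i
    obtain ⟨σ, hσ⟩ := g
    have himg : s.image σ = s := by
      apply Finset.coe_injective
      rw [Finset.coe_image, hs, Set.Finite.coe_toFinset]
      ext y
      constructor
      · rintro ⟨z, ⟨g, rfl⟩, rfl⟩
        refine ⟨(⟨σ, hσ⟩ : ↥G) * g, ?_⟩
        show ((⟨σ, hσ⟩ : ↥G) * g) • x = σ (g • x)
        rw [mul_smul]; rfl
      · rintro ⟨g, rfl⟩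
        refine ⟨((⟨σ, hσ⟩ : ↥G)⁻¹ * g) • x, ⟨_, rfl⟩, ?_⟩
        show ((⟨σ, hσ⟩ : ↥G) : L ≃ₐ[F] L) (((⟨σ, hσ⟩ : ↥G)⁻¹ * g) • x) = g • x
        have h3 : ((⟨σ, hσ⟩ : ↥G) : L ≃ₐ[F] L) (((⟨σ, hσ⟩ : ↥G)⁻¹ * g) • x)
            = ((⟨σ, hσ⟩ : ↥G) * ((⟨σ, hσ⟩ : ↥G)⁻¹ * g)) • x := by rw [mul_smul]; rfl
        rw [h3, ← mul_assoc, mul_inv_cancel, one_mul]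
    have hmap : P.map (σ : L →+* L) = P := by
      rw [hP, Polynomial.map_prod]
      simp only [Polynomial.map_sub, map_X, map_C]
      conv_rhs => rw [← himg]
      rw [Finset.prod_image (fun a _ b _ h => σ.injective h)]
      rfl
    calc σ (P.coeff i) = (P.map (σ : L →+* L)).coeff i := by rw [coeff_map]; rfl
    _ = P.coeff i := by rw [hmap]
  have hlifts : P ∈ Polynomial.lifts (algebraMap (IntermediateField.fixedField G) L) := by
    rw [Polynomial.lifts_iff_coeff_lifts]
    exact fun i => ⟨⟨P.coeff i, hcoeff i⟩, rfl⟩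
  obtain ⟨Q, hQmap, hQdeg, hQmonic⟩ :=
    Polynomial.lifts_and_degree_eq_and_monic hlifts hPmonic
  have hxroot : aeval x Q = 0 := by
    rw [aeval_def, ← eval_map, hQmap, hP]
    rw [eval_prod]
    refine Finset.prod_eq_zero (i := x) ?_ (by simp)
    rw [hs, Set.Finite.mem_toFinset]
    exact MulAction.mem_orbit_self x
  have hmin : (minpoly (IntermediateField.fixedField G) x).degree ≤ Q.degree :=
    minpoly.min _ _ hQmonic hxroot
  have : (minpoly (IntermediateField.fixedField G) x).natDegree ≤ Q.natDegree :=
    natDegree_le_natDegree hmin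
  have hQnat : Q.natDegree = P.natDegree := by
    have := hQdeg
    exact natDegree_eq_of_degree_eq this
  omega



/-- If `L/F` is Galois, `F'` an intermediate field with Galois group `H = Gal(L/F')`,
and `H'` is a closed subgroup of `Gal(L/F)` commensurable with `H`, then the fixed
field of `H'` is commensurable with `F'`. -/
theorem fixedField_commensurable {F L : Type*} [Field F] [Field L] [Algebra F L]
    [IsGalois F L] (F' : IntermediateField F L) (H' : Subgroup (L ≃ₐ[F] L))
    (hclosed : IsClosed (H' : Set (L ≃ₐ[F] L)))
    (hcomm : Subgroup.Commensurable F'.fixingSubgroup H') :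
    FiniteDimensional ↥F'
      ↥(IntermediateField.extendScalars
        (le_sup_left : F' ≤ F' ⊔ IntermediateField.fixedField H')) ∧
    FiniteDimensional ↥(IntermediateField.fixedField H')
      ↥(IntermediateField.extendScalars
        (le_sup_right : IntermediateField.fixedField H' ≤
          F' ⊔ IntermediateField.fixedField H')) := by
  classical
  set H : Subgroup (L ≃ₐ[F] L) := F'.fixingSubgroup with hH
  set N : Subgroup (L ≃ₐ[F] L) := H ⊓ H' with hN
  -- K = F' ⊔ fixedField H' is pointwise fixed by N
  have hF'N : F' ≤ IntermediateField.fixedField N :=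
    (IntermediateField.le_iff_le N F').mpr inf_le_left
  have hEN : IntermediateField.fixedField H' ≤ IntermediateField.fixedField N :=
    fun y hy g => hy ⟨g.1, (Subgroup.mem_inf.mp g.2).2⟩
  have hKN : F' ⊔ IntermediateField.fixedField H' ≤ IntermediateField.fixedField N :=
    sup_le hF'N hEN
  -- the fixed field of H is F'
  have hFH : IntermediateField.fixedField H = F' := by
    apply le_antisymm
    · intro x hxf
      have hfix : ∀ σ : L ≃ₐ[↥F'] L, σ x = x := by
        intro τ
        have hmem : (τ.restrictScalars F) ∈ H := by
          rw [hH]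
          intro y
          exact τ.commutes y
        exact hxf ⟨τ.restrictScalars F, hmem⟩
      have hb := mem_bot_of_fixed' (k := ↥F') x hfix
      rw [IntermediateField.mem_bot] at hb
      obtain ⟨y, rfl⟩ := hb
      exact y.2
    · exact (IntermediateField.le_iff_le H F').mpr le_rfl
  -- finite indices
  have hrel1 : (N.subgroupOf H).index ≠ 0 := by
    rw [hN, Subgroup.inf_subgroupOf_left]
    exact hcomm.2
  have hrel2 : (N.subgroupOf H').index ≠ 0 := by
    rw [hN, Subgroup.inf_subgroupOf_right]
    exact hcomm.1
  constructor
  · -- over F'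
    haveI : Algebra.IsSeparable (↥F') L :=
      Algebra.isSeparable_tower_top_of_isSeparable F (↥F') L
    haveI : Algebra.IsSeparable (↥F')
        ↥(IntermediateField.extendScalars
          (le_sup_left : F' ≤ F' ⊔ IntermediateField.fixedField H')) :=
      Algebra.isSeparable_tower_bot_of_isSeparable (↥F') _ L
    refine finiteDimensional_of_bddDeg ((N.subgroupOf H).index) fun x => ?_
    have hxK : (x : L) ∈ F' ⊔ IntermediateField.fixedField H' := x.2
    have hb := minpoly_natDegree_le_of_orbit H N hrel1 (x : L) (hKN hxK)
    rw [hFH] at hb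
    rw [← minpoly.algebraMap_eq
      (algebraMap
        (↥(IntermediateField.extendScalars
          (le_sup_left : F' ≤ F' ⊔ IntermediateField.fixedField H'))) L).injective x]
    exact hb
  · -- over fixedField H'
    haveI : Algebra.IsSeparable (↥(IntermediateField.fixedField H')) L :=
      Algebra.isSeparable_tower_top_of_isSeparable F (↥(IntermediateField.fixedField H')) L
    haveI : Algebra.IsSeparable (↥(IntermediateField.fixedField H'))
        ↥(IntermediateField.extendScalars
          (le_sup_right : IntermediateField.fixedField H' ≤
            F' ⊔ IntermediateField.fixedField H')) :=
      Algebra.isSeparable_tower_bot_of_isSeparable (↥(IntermediateField.fixedField H')) _ L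
    refine finiteDimensional_of_bddDeg ((N.subgroupOf H').index) fun x => ?_
    have hxK : (x : L) ∈ F' ⊔ IntermediateField.fixedField H' := x.2
    have hb := minpoly_natDegree_le_of_orbit H' N hrel2 (x : L) (hKN hxK)
    rw [← minpoly.algebraMap_eq
      (algebraMap
        (↥(IntermediateField.extendScalars
          (le_sup_right : IntermediateField.fixedField H' ≤
            F' ⊔ IntermediateField.fixedField H'))) L).injective x]
    exact hb
end
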